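/- Let X ⊆ M be a key in the context K = (G, M, I) such that for every proper subset Y ⊂ X, |Y'| − |X'| ≥ δ (i.e., X is a δ-key / Δ_key(X) ≥ δ). Then for any subset G_s ⊆ G with |G \ G_s| < δ, X remains a key in the sampled context K_s = (G_s, M, I_s): for every proper subset Y ⊂ X, Y' ∩ G_s ≠ X' ∩ G_s. -/
import Mathlib


def extentOf {G M : Type*} (I : G → M → Prop) (B : Set M) : Set G :=
  {g | ∀ m ∈ B, I g m}

/-- If `X` is a key with `Δ_key(X) ≥ δ` (every proper subset loses at least
`δ` of support), then `X` remains a key after removing fewer than `δ`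
objects. -/
theorem deltaKey_stable_under_sampling {G M : Type*} [Finite G]
    (I : G → M → Prop) (X : Set M) (δ : ℕ)
    (hkey : ∀ Y ⊂ X, extentOf I Y ≠ extentOf I X)
    (hδ : ∀ Y ⊂ X, (extentOf I Y).ncard - (extentOf I X).ncard ≥ δ)
    (Gs : Set G) (hGs : (Gsᶜ).ncard < δ) :
    ∀ Y ⊂ X, extentOf I Y ∩ Gs ≠ extentOf I X ∩ Gs := by
  intro Y hY heq
  have hsub : extentOf I X ⊆ extentOf I Y := fun g hg m hm => hg m (hY.subset hm)
  have hdiff : extentOf I Y \ extentOf I X ⊆ Gsᶜ := by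
    intro g ⟨hgY, hgX⟩ hgGs
    exact hgX (by
      have : g ∈ extentOf I X ∩ Gs := heq ▸ ⟨hgY, hgGs⟩
      exact this.1)
  have hfin : (extentOf I Y).Finite := Set.toFinite _
  have h1 : (extentOf I Y \ extentOf I X).ncard ≤ (Gsᶜ).ncard :=
    Set.ncard_le_ncard hdiff (Set.toFinite _)
  have h2 : (extentOf I Y \ extentOf I X).ncard
      = (extentOf I Y).ncard - (extentOf I X).ncard :=
    Set.ncard_diff hsub (Set.toFinite _)
  have := hδ Y hY
  omega
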